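/- Define P(A) = (1/d)‖Σ^{1/2}(AX − I)‖_F² + σ²‖Σ^{1/2}A‖_F². With A(ρ) as above and X X^T nonsingular, P(A(ρ)) − P(A(0)) = (ρ²σ⁴/d)·Tr((Σ − (ρ/d)X^T X)^{-1} Σ (Σ − (ρ/d)X^T X)^{-1} X^T X (X^T X + dσ² I)^{-1}). -/

import Mathlib

open Matrix

/-- Squared Frobenius norm. -/
noncomputable def frobSq {m k : ℕ} (A : Matrix (Fin m) (Fin k) ℝ) : ℝ :=
  Matrix.trace (Aᵀ * A)

/-- The dual-optimal linear estimator matrix `A(ρ)`. -/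
noncomputable def Adual (n d : ℕ) (X : Matrix (Fin n) (Fin d) ℝ)
    (Sigma : Matrix (Fin d) (Fin d) ℝ) (σ ρ : ℝ) : Matrix (Fin d) (Fin n) ℝ :=
  ((1 : Matrix (Fin d) (Fin d) ℝ)
      - (ρ * σ ^ 2) • (Sigma - (ρ / (d : ℝ)) • (Xᵀ * X))⁻¹)
    * (Xᵀ * X + ((d : ℝ) * σ ^ 2) • 1)⁻¹ * Xᵀ

/-- Prediction error functional `P(A) = (1/d)‖Σ^{1/2}(AX − I)‖_F² + σ²‖Σ^{1/2}A‖_F²`,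
written using a square root `S` of `Σ`. -/
noncomputable def predErr (n d : ℕ) (X : Matrix (Fin n) (Fin d) ℝ)
    (S : Matrix (Fin d) (Fin d) ℝ) (σ : ℝ) (A : Matrix (Fin d) (Fin n) ℝ) : ℝ :=
  (1 / (d : ℝ)) * frobSq (S * (A * X - 1)) + σ ^ 2 * frobSq (S * A)

lemma texp {d k : ℕ} (Sigma : Matrix (Fin d) (Fin d) ℝ) (hSigt : Sigmaᵀ = Sigma)
    (U V : Matrix (Fin d) (Fin k) ℝ) :
    Matrix.trace ((U + V)ᵀ * Sigma * (U + V))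
      = Matrix.trace (Uᵀ * Sigma * U) + 2 * Matrix.trace (Uᵀ * Sigma * V)
        + Matrix.trace (Vᵀ * Sigma * V) := by
  have h : Matrix.trace (Vᵀ * Sigma * U) = Matrix.trace (Uᵀ * Sigma * V) := by
    rw [← Matrix.trace_transpose (Vᵀ * Sigma * U)]
    simp [Matrix.transpose_mul, hSigt, Matrix.mul_assoc]
  simp only [Matrix.transpose_add, Matrix.add_mul, Matrix.mul_add, Matrix.trace_add, h]
  ring

lemma frob_S {d k : ℕ} (S Sigma : Matrix (Fin d) (Fin d) ℝ) (hSt : Sᵀ = S)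
    (hSsq : S * S = Sigma) (Z : Matrix (Fin d) (Fin k) ℝ) :
    frobSq (S * Z) = Matrix.trace (Zᵀ * Sigma * Z) := by
  unfold frobSq
  rw [Matrix.transpose_mul, hSt,
    Matrix.mul_assoc Zᵀ S (S * Z), ← Matrix.mul_assoc S S Z, hSsq, ← Matrix.mul_assoc]

/-- `P(A(ρ)) − P(A(0)) = (ρ²σ⁴/d)·Tr((Σ − (ρ/d)XᵀX)⁻¹ Σ (Σ − (ρ/d)XᵀX)⁻¹ XᵀX (XᵀX + dσ²I)⁻¹)`. -/
theorem stmt5 (n d : ℕ) (hnd : n ≤ d) (hd : 0 < d)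
    (X : Matrix (Fin n) (Fin d) ℝ) (hX : IsUnit (X * Xᵀ).det)
    (Sigma S : Matrix (Fin d) (Fin d) ℝ) (hSig : Sigma.PosDef)
    (hS : S.PosSemidef) (hSsq : S * S = Sigma)
    (σ ρ : ℝ) (hσ : 0 < σ) (hρ : 0 ≤ ρ)
    (hpd : (Sigma - (ρ / (d : ℝ)) • (Xᵀ * X)).PosDef) :
    predErr n d X S σ (Adual n d X Sigma σ ρ) - predErr n d X S σ (Adual n d X Sigma σ 0)
      = (ρ ^ 2 * σ ^ 4 / (d : ℝ)) *
          Matrix.trace ((Sigma - (ρ / (d : ℝ)) • (Xᵀ * X))⁻¹ * Sigma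
            * (Sigma - (ρ / (d : ℝ)) • (Xᵀ * X))⁻¹ * (Xᵀ * X)
            * (Xᵀ * X + ((d : ℝ) * σ ^ 2) • 1)⁻¹) := by
  classical
  have hd' : (0:ℝ) < (d:ℝ) := by exact_mod_cast hd
  have hSigt : Sigmaᵀ = Sigma := by
    rw [← Matrix.conjTranspose_eq_transpose_of_trivial]; exact hSig.1.eq
  have hSt : Sᵀ = S := by
    rw [← Matrix.conjTranspose_eq_transpose_of_trivial]; exact hS.1.eq
  set M : Matrix (Fin d) (Fin d) ℝ := Xᵀ * X with hM
  set c : ℝ := (d : ℝ) * σ ^ 2 with hc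
  set K : Matrix (Fin d) (Fin d) ℝ := M + c • 1 with hKdef
  set Cρ : Matrix (Fin d) (Fin d) ℝ := Sigma - (ρ / (d : ℝ)) • M with hCdef
  set B : Matrix (Fin d) (Fin d) ℝ := K⁻¹ with hB
  set R : Matrix (Fin d) (Fin d) ℝ := Cρ⁻¹ with hR
  have hc0 : 0 < c := by positivity
  have hMt : Mᵀ = M := by rw [hM]; simp
  have hMps : M.PosSemidef := by
    have := Matrix.posSemidef_conjTranspose_mul_self X
    rwa [Matrix.conjTranspose_eq_transpose_of_trivial] at this
  have hc1pd : (c • (1 : Matrix (Fin d) (Fin d) ℝ)).PosDef := by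
    refine Matrix.PosDef.of_dotProduct_mulVec_pos ?_ (fun x hx => ?_)
    · simp [Matrix.IsHermitian]
    · simp only [Matrix.smul_mulVec, Matrix.one_mulVec, dotProduct_smul,
        smul_eq_mul]
      exact mul_pos hc0 (Matrix.dotProduct_star_self_pos_iff.mpr hx)
  have hKpd : K.PosDef := Matrix.PosDef.posSemidef_add hMps hc1pd
  have hKdet : IsUnit K.det := hKpd.det_pos.ne'.isUnit
  have hCdet : IsUnit Cρ.det := hpd.det_pos.ne'.isUnit
  have hBK : B * K = 1 := Matrix.nonsing_inv_mul K hKdet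
  have hKB : K * B = 1 := Matrix.mul_nonsing_inv K hKdet
  have hKt : Kᵀ = K := by rw [hKdef]; simp [hMt]
  have hCt : Cρᵀ = Cρ := by rw [hCdef]; simp [hMt, hSigt]
  have hBt : Bᵀ = B := by rw [hB, Matrix.transpose_nonsing_inv, hKt]
  have hRt : Rᵀ = R := by rw [hR, Matrix.transpose_nonsing_inv, hCt]
  have hBM1 : B * M - 1 = -(c • B) := by
    have h1 : B * M - B * K = -(c • B) := by
      rw [← Matrix.mul_sub, hKdef]
      simp [mul_smul_comm]
    rwa [hBK] at h1
  have hA0 : Adual n d X Sigma σ 0 = B * Xᵀ := by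
    simp only [Adual, zero_mul, zero_smul, sub_zero, Matrix.one_mul]
    rfl
  have hAρ : Adual n d X Sigma σ ρ
      = B * Xᵀ + -((ρ * σ ^ 2) • (R * (B * Xᵀ))) := by
    simp only [Adual]
    rw [← hM, ← hc, ← hKdef, ← hCdef, ← hB, ← hR]
    rw [Matrix.sub_mul, Matrix.sub_mul, Matrix.one_mul, sub_eq_add_neg,
      Matrix.smul_mul, Matrix.smul_mul, Matrix.mul_assoc]
  have hA0X : (B * Xᵀ) * X - 1 = -(c • B) := by
    rw [Matrix.mul_assoc, ← hM, hBM1]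
  have hAρX : (B * Xᵀ + -((ρ * σ ^ 2) • (R * (B * Xᵀ)))) * X - 1
      = -(c • B) + -((ρ * σ ^ 2) • (R * (B * M))) := by
    rw [Matrix.add_mul, Matrix.neg_mul, Matrix.smul_mul, Matrix.mul_assoc R (B * Xᵀ) X,
      Matrix.mul_assoc B Xᵀ X, ← hM, sub_eq_add_neg, add_right_comm,
      ← sub_eq_add_neg (B * M) 1, hBM1]
  simp only [predErr]
  rw [hAρ, hA0, frob_S S Sigma hSt hSsq, frob_S S Sigma hSt hSsq,
    frob_S S Sigma hSt hSsq, frob_S S Sigma hSt hSsq, hAρX, hA0X,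
    texp Sigma hSigt (-(c • B)) (-((ρ * σ ^ 2) • (R * (B * M)))),
    texp Sigma hSigt (B * Xᵀ) (-((ρ * σ ^ 2) • (R * (B * Xᵀ))))]
  have h1 : ((-(c • B))ᵀ * Sigma * -((ρ * σ ^ 2) • (R * (B * M)))).trace
      = ((↑d * σ ^ 2) * (ρ * σ ^ 2)) * (B * (Sigma * (R * (B * M)))).trace := by
    simp only [Matrix.transpose_neg, Matrix.transpose_smul, Matrix.transpose_mul,
      Matrix.transpose_transpose, hMt, hBt, hRt, Matrix.neg_mul, Matrix.mul_neg,
      Matrix.smul_mul, Matrix.mul_smul, Matrix.trace_neg, Matrix.trace_smul, smul_neg,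
      neg_neg, smul_smul, smul_eq_mul, Matrix.mul_assoc]
    ring
  have h2 : ((-((ρ * σ ^ 2) • (R * (B * M))))ᵀ * Sigma * -((ρ * σ ^ 2) • (R * (B * M)))).trace
      = (ρ * σ ^ 2) ^ 2 * (M * (B * (R * (Sigma * (R * (B * M)))))).trace := by
    simp only [Matrix.transpose_neg, Matrix.transpose_smul, Matrix.transpose_mul,
      Matrix.transpose_transpose, hMt, hBt, hRt, Matrix.neg_mul, Matrix.mul_neg,
      Matrix.smul_mul, Matrix.mul_smul, Matrix.trace_neg, Matrix.trace_smul, smul_neg,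
      neg_neg, smul_smul, smul_eq_mul, Matrix.mul_assoc]
    ring
  have h3 : ((B * Xᵀ)ᵀ * Sigma * -((ρ * σ ^ 2) • (R * (B * Xᵀ)))).trace
      = -((ρ * σ ^ 2) * (X * (B * (Sigma * (R * (B * Xᵀ))))).trace) := by
    simp only [Matrix.transpose_neg, Matrix.transpose_smul, Matrix.transpose_mul,
      Matrix.transpose_transpose, hMt, hBt, hRt, Matrix.neg_mul, Matrix.mul_neg,
      Matrix.smul_mul, Matrix.mul_smul, Matrix.trace_neg, Matrix.trace_smul, smul_neg,
      neg_neg, smul_smul, smul_eq_mul, Matrix.mul_assoc]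
  have h4 : ((-((ρ * σ ^ 2) • (R * (B * Xᵀ))))ᵀ * Sigma * -((ρ * σ ^ 2) • (R * (B * Xᵀ)))).trace
      = (ρ * σ ^ 2) ^ 2 * (X * (B * (R * (Sigma * (R * (B * Xᵀ)))))).trace := by
    simp only [Matrix.transpose_neg, Matrix.transpose_smul, Matrix.transpose_mul,
      Matrix.transpose_transpose, hMt, hBt, hRt, Matrix.neg_mul, Matrix.mul_neg,
      Matrix.smul_mul, Matrix.mul_smul, Matrix.trace_neg, Matrix.trace_smul, smul_neg,
      neg_neg, smul_smul, smul_eq_mul, Matrix.mul_assoc]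
    ring
  have h5 : (X * (B * (Sigma * (R * (B * Xᵀ))))).trace
      = (B * (Sigma * (R * (B * M)))).trace := by
    rw [Matrix.trace_mul_comm]
    simp only [Matrix.mul_assoc]
    rfl
  have h6 : (X * (B * (R * (Sigma * (R * (B * Xᵀ)))))).trace
      = (R * (Sigma * (R * (B * (M * B))))).trace := by
    rw [Matrix.trace_mul_comm]
    simp only [Matrix.mul_assoc]
    rw [← hM, Matrix.trace_mul_comm]
    simp only [Matrix.mul_assoc]
  have h7 : (M * (B * (R * (Sigma * (R * (B * M)))))).trace
      = (R * (Sigma * (R * (B * (M * (M * B)))))).trace := by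
    rw [Matrix.trace_mul_comm]
    simp only [Matrix.mul_assoc]
    rw [Matrix.trace_mul_comm]
    simp only [Matrix.mul_assoc]
  have hfac : M * B + c • B = 1 := by
    have h := hKB
    rw [hKdef, Matrix.add_mul, Matrix.smul_mul, Matrix.one_mul] at h
    exact h
  have h8 : (R * (Sigma * (R * (B * (M * (M * B)))))).trace
      + c * (R * (Sigma * (R * (B * (M * B))))).trace
      = (R * (Sigma * (R * (B * M)))).trace := by
    calc (R * (Sigma * (R * (B * (M * (M * B)))))).trace
        + c * (R * (Sigma * (R * (B * (M * B))))).trace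
        = (R * (Sigma * (R * (B * (M * (M * B + c • B)))))).trace := by
          simp only [Matrix.mul_add, Matrix.mul_smul, Matrix.trace_add, Matrix.trace_smul,
            smul_eq_mul]
      _ = _ := by rw [hfac, Matrix.mul_one]
  have hMB : B * M = M * B := by
    have h1 : M * K = K * M := by
      rw [hKdef]
      simp only [Matrix.mul_add, Matrix.add_mul, Matrix.mul_smul, Matrix.smul_mul,
        Matrix.mul_one, Matrix.one_mul]
    have h2 : B * (M * K) * B = B * (K * M) * B := by rw [h1]
    rw [← Matrix.mul_assoc B M K, Matrix.mul_assoc (B * M) K B, hKB, Matrix.mul_one,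
      ← Matrix.mul_assoc B K M, hBK, Matrix.one_mul] at h2
    exact h2
  rw [hMB] at h8
  rw [h1, h2, h3, h4, h5, h6, h7]
  simp only [Matrix.mul_assoc]
  rw [← h8, hc]
  have hd0 : ((d : ℝ)) ≠ 0 := ne_of_gt hd'
  field_simp
  ring
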